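/- Let U be an invertible upper-triangular Toeplitz matrix over a (possibly noncommutative) ring with unity, and let L = Uᵀ. Then U⁻¹ = (L⁻¹)ᵀ, i.e., the inverse of the transpose equals the transpose of the inverse for triangular Toeplitz matrices. -/

import Mathlib

open Matrix

section Aux

variable {R : Type*} [Ring R] {m : ℕ}

/-- The inverse of an invertible upper-triangular matrix is upper triangular,
over a possibly noncommutative ring, provided the matrix is also Toeplitz. -/
lemma aux_invOf_tri (U : Matrix (Fin m) (Fin m) R)
    (htoep : ∀ i j k l : Fin m, (i : ℕ) + (l : ℕ) = (k : ℕ) + (j : ℕ) → U i j = U k l)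
    (htri : ∀ i j : Fin m, (j : ℕ) < (i : ℕ) → U i j = 0)
    (hU : Invertible U) :
    ∀ i j : Fin m, (j : ℕ) < (i : ℕ) → ⅟U i j = 0 := by
  have hVU : ⅟U * U = 1 := invOf_mul_self U
  have hUV : U * ⅟U = 1 := mul_invOf_self U
  suffices H : ∀ n (i j : Fin m), m - (i : ℕ) ≤ n → (j : ℕ) < (i : ℕ) → ⅟U i j = 0 by
    intro i j hij
    exact H m i j (by omega) hij
  intro n
  induction n with
  | zero =>
    intro i j hn _
    have := i.isLt
    omega
  | succ n ih =>
    intro i j hn hj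
    have hm : 0 < m := i.pos
    set z : Fin m := ⟨0, hm⟩ with hzdef
    -- left inverse of the diagonal entry
    have hz : ⅟U z z * U z z = 1 := by
      have h := congrFun (congrFun hVU z) z
      rw [Matrix.mul_apply, Finset.sum_eq_single z] at h
      · rw [h, Matrix.one_apply_eq]
      · intro b _ hb
        have hb0 : (b : ℕ) ≠ 0 := fun h0 => hb (Fin.ext h0)
        rw [htri b z (show (z : ℕ) < (b : ℕ) by show 0 < (b : ℕ); omega), mul_zero]
      · intro h'; exact absurd (Finset.mem_univ z) h'
    have hrow : U i i * ⅟U i j = 0 := by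
      have h := congrFun (congrFun hUV i) j
      rw [Matrix.mul_apply, Finset.sum_eq_single i] at h
      · rw [Matrix.one_apply_ne (Fin.ne_of_val_ne (by omega))] at h
        exact h
      · intro b _ hb
        rcases lt_or_gt_of_ne (fun hh : (b : ℕ) = (i : ℕ) => hb (Fin.ext hh)) with hlt | hgt
        · rw [htri i b hlt, zero_mul]
        · rw [ih b j (by omega) (by omega), mul_zero]
      · intro h'; exact absurd (Finset.mem_univ i) h'
    have hzz : U z z = U i i := htoep z z i i (by omega)
    calc ⅟U i j = (⅟U z z * U z z) * ⅟U i j := by rw [hz, one_mul]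
      _ = ⅟U z z * (U z z * ⅟U i j) := mul_assoc _ _ _
      _ = 0 := by rw [hzz, hrow, mul_zero]

lemma aux_invOf_toep (U : Matrix (Fin m) (Fin m) R)
    (htoep : ∀ i j k l : Fin m, (i : ℕ) + (l : ℕ) = (k : ℕ) + (j : ℕ) → U i j = U k l)
    (htri : ∀ i j : Fin m, (j : ℕ) < (i : ℕ) → U i j = 0)
    (hU : Invertible U) :
    ∀ i j k l : Fin m, (i : ℕ) + (l : ℕ) = (k : ℕ) + (j : ℕ) → ⅟U i j = ⅟U k l := by
  set N : Matrix (Fin m) (Fin m) R :=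
    Matrix.of (fun i j => if (i : ℕ) + 1 = (j : ℕ) then 1 else 0) with hNdef
  have mulN : ∀ (A : Matrix (Fin m) (Fin m) R) (a b : Fin m),
      (A * N) a b = if hb : 1 ≤ (b : ℕ) then A a ⟨(b : ℕ) - 1, by omega⟩ else 0 := by
    intro A a b
    rw [Matrix.mul_apply]
    by_cases hb : 1 ≤ (b : ℕ)
    · rw [dif_pos hb, Finset.sum_eq_single (⟨(b : ℕ) - 1, by omega⟩ : Fin m)]
      · simp only [hNdef, Matrix.of_apply]
        rw [if_pos (show (b : ℕ) - 1 + 1 = (b : ℕ) by omega), mul_one]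
      · intro c _ hc
        simp only [hNdef, Matrix.of_apply]
        rw [if_neg (by
          intro hcb
          exact hc (Fin.ext (show (c : ℕ) = (b : ℕ) - 1 by omega))), mul_zero]
      · intro h'; exact absurd (Finset.mem_univ _) h'
    · rw [dif_neg hb]
      apply Finset.sum_eq_zero
      intro c _
      simp only [hNdef, Matrix.of_apply]
      rw [if_neg (by omega), mul_zero]
  have Nmul : ∀ (A : Matrix (Fin m) (Fin m) R) (a b : Fin m),
      (N * A) a b = if ha : (a : ℕ) + 1 < m then A ⟨(a : ℕ) + 1, ha⟩ b else 0 := by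
    intro A a b
    rw [Matrix.mul_apply]
    by_cases ha : (a : ℕ) + 1 < m
    · rw [dif_pos ha, Finset.sum_eq_single (⟨(a : ℕ) + 1, ha⟩ : Fin m)]
      · simp only [hNdef, Matrix.of_apply]
        simp
      · intro c _ hc
        simp only [hNdef, Matrix.of_apply]
        rw [if_neg (fun hcb => hc (Fin.ext (show (c : ℕ) = (a : ℕ) + 1 by
          have hcb' : (a : ℕ) + 1 = (c : ℕ) := hcb
          omega))), zero_mul]
      · intro h'; exact absurd (Finset.mem_univ _) h'
    · rw [dif_neg ha]
      apply Finset.sum_eq_zero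
      intro c _
      simp only [hNdef, Matrix.of_apply]
      rw [if_neg (by have := c.isLt; omega), zero_mul]
  have h1 : U * N = N * U := by
    ext a b
    rw [mulN, Nmul]
    by_cases hb : 1 ≤ (b : ℕ) <;> by_cases ha : (a : ℕ) + 1 < m
    · rw [dif_pos hb, dif_pos ha]
      exact htoep a ⟨(b : ℕ) - 1, by omega⟩ ⟨(a : ℕ) + 1, ha⟩ b (by show _ = (a:ℕ)+1+((b:ℕ)-1); omega)
    · rw [dif_pos hb, dif_neg ha]
      exact htri a ⟨(b : ℕ) - 1, by omega⟩ (by show (b:ℕ)-1 < (a:ℕ); have := b.isLt; omega)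
    · rw [dif_neg hb, dif_pos ha]
      exact (htri ⟨(a : ℕ) + 1, ha⟩ b (by show (b:ℕ) < (a:ℕ)+1; omega)).symm
    · rw [dif_neg hb, dif_neg ha]
  have h2 : N * ⅟U = ⅟U * N := by
    have e1 : ⅟U * (U * N) * ⅟U = N * ⅟U := by
      rw [← mul_assoc, invOf_mul_self, one_mul]
    have e2 : ⅟U * (N * U) * ⅟U = ⅟U * N := by
      rw [mul_assoc, mul_assoc, mul_invOf_self, mul_one]
    rw [← e1, h1]
    exact e2 
  have step : ∀ (i j : Fin m) (hi : (i : ℕ) + 1 < m) (hj : (j : ℕ) + 1 < m),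
      ⅟U ⟨(i : ℕ) + 1, hi⟩ ⟨(j : ℕ) + 1, hj⟩ = ⅟U i j := by
    intro i j hi hj
    have h := congrFun (congrFun h2 i) ⟨(j : ℕ) + 1, hj⟩
    rw [Nmul, mulN, dif_pos hi,
      dif_pos (show 1 ≤ ((⟨(j : ℕ) + 1, hj⟩ : Fin m) : ℕ) by show 1 ≤ (j:ℕ)+1; omega)] at h
    exact h
  have shift : ∀ (d : ℕ) (i j : Fin m) (hi : (i : ℕ) + d < m) (hj : (j : ℕ) + d < m),
      ⅟U ⟨(i : ℕ) + d, hi⟩ ⟨(j : ℕ) + d, hj⟩ = ⅟U i j := by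
    intro d
    induction d with
    | zero => intro i j hi hj; rfl
    | succ d ihd =>
      intro i j hi hj
      have hi' : (i : ℕ) + d < m := by omega
      have hj' : (j : ℕ) + d < m := by omega
      exact (step ⟨(i : ℕ) + d, hi'⟩ ⟨(j : ℕ) + d, hj'⟩ hi hj).trans (ihd i j hi' hj')
  intro i j k l h
  rcases le_total (i : ℕ) (k : ℕ) with hik | hik
  · have hs := shift ((k : ℕ) - (i : ℕ)) i j (by have := k.isLt; omega)
      (by have := l.isLt; omega)
    have hk' : (⟨(i : ℕ) + ((k : ℕ) - (i : ℕ)), by have := k.isLt; omega⟩ : Fin m) = k :=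
      Fin.ext (show (i : ℕ) + ((k : ℕ) - (i : ℕ)) = (k : ℕ) by omega)
    have hl' : (⟨(j : ℕ) + ((k : ℕ) - (i : ℕ)), by have := l.isLt; omega⟩ : Fin m) = l :=
      Fin.ext (show (j : ℕ) + ((k : ℕ) - (i : ℕ)) = (l : ℕ) by omega)
    rw [hk', hl'] at hs
    exact hs.symm
  · have hs := shift ((i : ℕ) - (k : ℕ)) k l (by have := i.isLt; omega)
      (by have := j.isLt; omega)
    have hi' : (⟨(k : ℕ) + ((i : ℕ) - (k : ℕ)), by have := i.isLt; omega⟩ : Fin m) = i :=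
      Fin.ext (show (k : ℕ) + ((i : ℕ) - (k : ℕ)) = (i : ℕ) by omega)
    have hj' : (⟨(l : ℕ) + ((i : ℕ) - (k : ℕ)), by have := j.isLt; omega⟩ : Fin m) = j :=
      Fin.ext (show (l : ℕ) + ((i : ℕ) - (k : ℕ)) = (j : ℕ) by omega)
    rw [hi', hj'] at hs
    exact hs

end Aux

/-- For an invertible upper-triangular Toeplitz matrix U over a
(possibly noncommutative) ring with unity, with L = Uᵀ, one has U⁻¹ = (L⁻¹)ᵀ. -/
theorem toeplitz_triangular_inverse_transpose {R : Type*} [Ring R] {m : ℕ}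
    (U : Matrix (Fin m) (Fin m) R)
    (htoep : ∀ i j k l : Fin m, (i : ℕ) + (l : ℕ) = (k : ℕ) + (j : ℕ) → U i j = U k l)
    (htri : ∀ i j : Fin m, (j : ℕ) < (i : ℕ) → U i j = 0)
    (hU : Invertible U) (hL : Invertible Uᵀ) :
    ⅟U = (⅟(Uᵀ))ᵀ := by
  have htriV := aux_invOf_tri U htoep htri hU
  have htoepV := aux_invOf_toep U htoep htri hU
  have key : Uᵀ * (⅟U)ᵀ = 1 := by
    ext i j
    rw [Matrix.mul_apply, Matrix.one_apply]
    simp only [Matrix.transpose_apply]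
    have huv := congrFun (congrFun (mul_invOf_self U) j) i
    rw [Matrix.mul_apply, Matrix.one_apply] at huv
    have hif : (if i = j then (1 : R) else 0) = (if j = i then 1 else 0) := by
      by_cases h : i = j <;> simp [h, eq_comm]
    rw [hif, ← huv]
    set σ : Fin m → Fin m := fun k =>
      if h : (j : ℕ) ≤ (k : ℕ) ∧ (k : ℕ) ≤ (i : ℕ) then
        ⟨(i : ℕ) + (j : ℕ) - (k : ℕ), by have := i.isLt; omega⟩
      else k with hσ
    have hinv : Function.Involutive σ := by
      intro k
      by_cases h : (j : ℕ) ≤ (k : ℕ) ∧ (k : ℕ) ≤ (i : ℕ)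
      · simp only [hσ]
        rw [dif_pos h, dif_pos (by simp; omega)]
        exact Fin.ext (by simp; omega)
      · simp only [hσ]
        rw [dif_neg h, dif_neg h]
    refine Fintype.sum_bijective σ hinv.bijective _ _ (fun k => ?_)
    by_cases h : (j : ℕ) ≤ (k : ℕ) ∧ (k : ℕ) ≤ (i : ℕ)
    · simp only [hσ, dif_pos h]
      rw [htoep k i j ⟨(i : ℕ) + (j : ℕ) - (k : ℕ), by have := i.isLt; omega⟩ (by simp; omega),
        htoepV j k ⟨(i : ℕ) + (j : ℕ) - (k : ℕ), by have := i.isLt; omega⟩ i (by simp; omega)]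
    · simp only [hσ, dif_neg h]
      rcases (by omega : (k : ℕ) < (j : ℕ) ∨ (i : ℕ) < (k : ℕ)) with hlt | hgt
      · rw [htriV j k hlt, htri j k hlt, mul_zero, zero_mul]
      · rw [htri k i hgt, htriV k i hgt, mul_zero, zero_mul]
  have hinv2 : ⅟(Uᵀ) = (⅟U)ᵀ := invOf_eq_right_inv key
  rw [hinv2, Matrix.transpose_transpose]
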